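/- Let σ₀ = {0} ∪ {(-1)^k/k : k = 1, 2, 3, ...}, a compact subset of ℝ, and let c₀ denote the Banach space of complex sequences converging to 0 with the supremum norm. There exist a bounded linear operator T on c₀ and a constant C > 0 such that ‖p(T)‖ ≤ C·(sup_{t∈σ₀}|p(t)| + var_{σ₀}(p)) for every polynomial p with complex coefficients (where p(T) is given by the polynomial functional calculus and p is regarded as the function t ↦ p(t) on ℝ), yet there is no BV(σ₀) extension of the polynomial calculus of T. -/

import Mathlib

open MeasureTheory Filter Topology ZeroAtInfty

/-- The set `σ₀ = {0} ∪ {(-1)^k/k : k ≥ 1}`. -/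
noncomputable def sigma0 : Set ℝ := {0} ∪ {t : ℝ | ∃ k : ℕ, 1 ≤ k ∧ t = (-1) ^ k / k}

lemma zero_mem_sigma0 : (0 : ℝ) ∈ sigma0 := Or.inl rfl

lemma mem_sigma0 (k : ℕ) (hk : 1 ≤ k) : ((-1 : ℝ)) ^ k / k ∈ sigma0 :=
  Or.inr ⟨k, hk, rfl⟩

lemma sigma0_eq : sigma0 = insert (0 : ℝ) (Set.range fun k : ℕ => ((-1 : ℝ)) ^ (k + 1) / (k + 1)) := by
  ext t
  simp only [sigma0, Set.mem_union, Set.mem_singleton_iff, Set.mem_setOf_eq, Set.mem_insert_iff,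
    Set.mem_range]
  constructor
  · rintro (h | ⟨k, hk, rfl⟩)
    · exact Or.inl h
    · right
      refine ⟨k - 1, ?_⟩
      have hk' : k - 1 + 1 = k := Nat.succ_pred_eq_of_pos hk
      rw [hk']
      congr 1
      exact_mod_cast congrArg (Nat.cast : ℕ → ℝ) hk'
  · rintro (h | ⟨k, rfl⟩)
    · exact Or.inl h
    · right
      exact ⟨k + 1, Nat.le_add_left 1 k, by push_cast; ring⟩

lemma sigma0_isCompact : IsCompact sigma0 := by
  rw [sigma0_eq]
  have h : Tendsto (fun k : ℕ => ((-1 : ℝ)) ^ (k + 1) / (k + 1)) atTop (𝓝 0) := by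
    apply squeeze_zero_norm (a := fun k : ℕ => 1 / ((k : ℝ) + 1))
    · intro k
      rw [norm_div, norm_pow, norm_neg, norm_one, one_pow]
      simp [Real.norm_eq_abs, abs_of_nonneg (by positivity : (0:ℝ) ≤ (k:ℝ) + 1)]
    · exact tendsto_one_div_add_atTop_nhds_zero_nat
  exact h.isCompact_insert_range

instance : CompactSpace ↥sigma0 := isCompact_iff_compactSpace.mp sigma0_isCompact


/-- The `BV(σ)` norm-type quantity `sup_{t ∈ σ} |f(t)| + var_σ(f)`. -/
noncomputable def bvNorm (σ : Set ℝ) (f : ℝ → ℂ) : ℝ :=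
  sSup ((fun t => ‖f t‖) '' σ) + (eVariationOn f σ).toReal

/-- A `BV(σ)` extension of the polynomial calculus of a bounded operator `T` on a complex
Banach space `X`: a pair `(Ψ, C')` with `C' > 0`, `Ψ` additive and multiplicative on functions
of bounded variation on `σ`, `‖Ψ(f)‖ ≤ C'·(sup_{t∈σ}|f(t)| + var_σ(f))` for such `f`, and
`Ψ(p) = p(T)` for every polynomial `p`. -/
def HasBVExtension {X : Type*} [NormedAddCommGroup X] [NormedSpace ℂ X]
    (σ : Set ℝ) (T : X →L[ℂ] X) : Prop :=
  ∃ (C' : ℝ) (_ : 0 < C') (Ψ : (ℝ → ℂ) → X →L[ℂ] X),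
    (∀ f g : ℝ → ℂ, BoundedVariationOn f σ → BoundedVariationOn g σ →
      Ψ (f + g) = Ψ f + Ψ g ∧ Ψ (f * g) = (Ψ f).comp (Ψ g)) ∧
    (∀ f : ℝ → ℂ, BoundedVariationOn f σ → ‖Ψ f‖ ≤ C' * bvNorm σ f) ∧
    (∀ p : Polynomial ℂ, Ψ (fun t : ℝ => p.eval (t : ℂ)) = Polynomial.aeval T p)

open Polynomial

namespace Stmt3Aux

noncomputable def lam (k : ℕ) : ℝ := (-1) ^ k / k

lemma lam_zero : lam 0 = 0 := by simp [lam]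

lemma abs_lam (k : ℕ) : |lam k| = 1 / k := by
  simp [lam, abs_div]

lemma lam_ne_zero {k : ℕ} (hk : 1 ≤ k) : lam k ≠ 0 := by
  intro h
  have h1 := abs_lam k
  rw [h, abs_zero] at h1
  have h2 : (0 : ℝ) < 1 / k := by
    apply div_pos one_pos
    exact_mod_cast hk
  rw [← h1] at h2
  exact lt_irrefl _ h2

lemma abs_lam_le_one (k : ℕ) : |lam k| ≤ 1 := by
  rw [abs_lam]
  rcases Nat.eq_zero_or_pos k with h | h
  · simp [h]
  · rw [div_le_one (by exact_mod_cast h)]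
    exact_mod_cast h

lemma lam_even {k : ℕ} (hk : Even k) : lam k = 1 / k := by
  simp [lam, hk.neg_one_pow]

lemma lam_odd {k : ℕ} (hk : Odd k) : lam k = -(1 / k) := by
  simp [lam, hk.neg_one_pow, neg_div]

lemma lam_le_half (k : ℕ) : lam k ≤ 1 / 2 := by
  rcases Nat.even_or_odd k with h | h
  · rw [lam_even h]
    rcases Nat.eq_zero_or_pos k with h0 | h0
    · simp [h0]
    · have h2 : (2 : ℝ) ≤ k := by
        have : 2 ≤ k := by
          rcases h with ⟨m, hm⟩
          omega
        exact_mod_cast this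
      rw [div_le_div_iff₀ (by linarith) (by norm_num)]
      linarith
  · rw [lam_odd h]
    have : 0 ≤ (1 : ℝ) / k := by positivity
    linarith

lemma neg_one_le_lam (k : ℕ) : -1 ≤ lam k := neg_le_of_abs_le (abs_lam_le_one k)

lemma lam_mem (k : ℕ) : lam k ∈ sigma0 := by
  rcases Nat.eq_zero_or_pos k with h | h
  · rw [h, lam_zero]; exact zero_mem_sigma0
  · exact mem_sigma0 k h

lemma sigma0_subset : sigma0 ⊆ Set.Icc (-1 : ℝ) (1 / 2) := by
  rintro t (h | ⟨k, hk, rfl⟩)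
  · rw [Set.mem_singleton_iff] at h
    subst h; constructor <;> norm_num
  · exact ⟨neg_one_le_lam k, lam_le_half k⟩

lemma lam_tendsto : Tendsto lam atTop (𝓝 0) := by
  apply squeeze_zero_norm (a := fun k : ℕ => 1 / (k : ℝ))
  · intro k; rw [Real.norm_eq_abs, abs_lam]
  · exact tendsto_one_div_atTop_nhds_zero_nat

end Stmt3Aux

namespace Stmt3Aux

/-! ### The space `c₀` and the operator `T` -/

noncomputable def mk0 (f : ℕ → ℂ) (h : Tendsto f atTop (𝓝 0)) : C₀(ℕ, ℂ) :=
  ⟨⟨f, continuous_of_discreteTopology⟩, by rwa [cocompact_eq_atTop (α := ℕ)]⟩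

@[simp] lemma mk0_apply (f : ℕ → ℂ) (h) (k : ℕ) : mk0 f h k = f k := rfl

lemma coord_tendsto (x : C₀(ℕ, ℂ)) : Tendsto (fun k => x k) atTop (𝓝 0) := by
  have := x.zero_at_infty'
  rwa [cocompact_eq_atTop (α := ℕ)] at this

lemma norm_coord (x : C₀(ℕ, ℂ)) (k : ℕ) : ‖x k‖ ≤ ‖x‖ := by
  rw [← ZeroAtInftyContinuousMap.norm_toBCF_eq_norm]
  exact BoundedContinuousFunction.norm_coe_le_norm x.toBCF k

lemma norm_le_of (x : C₀(ℕ, ℂ)) {c : ℝ} (hc : 0 ≤ c) (h : ∀ k, ‖x k‖ ≤ c) : ‖x‖ ≤ c := by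
  rw [← ZeroAtInftyContinuousMap.norm_toBCF_eq_norm]
  exact (BoundedContinuousFunction.norm_le hc).mpr h

noncomputable def unit (n : ℕ) : C₀(ℕ, ℂ) :=
  mk0 (fun j => if j = n then 1 else 0) (by
    apply tendsto_nhds_of_eventually_eq
    filter_upwards [eventually_gt_atTop n] with j hj
    simp [Nat.ne_of_gt hj])

@[simp] lemma unit_apply (n j : ℕ) : unit n j = if j = n then 1 else 0 := rfl

lemma norm_unit (n : ℕ) : ‖unit n‖ = 1 := by
  apply le_antisymm
  · apply norm_le_of _ zero_le_one
    intro k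
    by_cases h : k = n <;> simp [h]
  · have := norm_coord (unit n) n
    simpa using this

noncomputable def Top : C₀(ℕ, ℂ) →L[ℂ] C₀(ℕ, ℂ) :=
  LinearMap.mkContinuous
    { toFun := fun x => mk0 (fun k => (lam k : ℂ) * (x k + x 0))
        (by
          have h1 : Tendsto (fun k => ((lam k : ℝ) : ℂ)) atTop (𝓝 0) := by
            rw [show ((0:ℂ) = ((0:ℝ):ℂ)) by norm_num]
            exact (Complex.continuous_ofReal.tendsto 0).comp lam_tendsto
          have h2 : Tendsto (fun k => x k + x 0) atTop (𝓝 (0 + x 0)) :=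
            (coord_tendsto x).add tendsto_const_nhds
          simpa using h1.mul h2)
      map_add' := by
        intro x y
        ext k
        simp
        ring
      map_smul' := by
        intro c x
        ext k
        simp
        ring }
    2
    (by
      intro x
      simp only [LinearMap.coe_mk, AddHom.coe_mk]
      apply norm_le_of _ (by positivity)
      intro k
      simp only [mk0_apply]
      rw [norm_mul]
      have h1 : ‖((lam k : ℝ) : ℂ)‖ ≤ 1 := by
        rw [Complex.norm_real, Real.norm_eq_abs]
        exact abs_lam_le_one k
      have h2 : ‖x k + x 0‖ ≤ 2 * ‖x‖ := by
        calc ‖x k + x 0‖ ≤ ‖x k‖ + ‖x 0‖ := norm_add_le _ _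
        _ ≤ ‖x‖ + ‖x‖ := add_le_add (norm_coord x k) (norm_coord x 0)
        _ = 2 * ‖x‖ := by ring
      calc ‖((lam k : ℝ) : ℂ)‖ * ‖x k + x 0‖ ≤ 1 * (2 * ‖x‖) :=
        mul_le_mul h1 h2 (norm_nonneg _) zero_le_one
      _ = 2 * ‖x‖ := by ring)

@[simp] lemma Top_apply (x : C₀(ℕ, ℂ)) (k : ℕ) :
    Top x k = (lam k : ℂ) * (x k + x 0) := rfl

lemma Top_apply_zero (x : C₀(ℕ, ℂ)) : Top x 0 = 0 := by
  simp [lam_zero]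

end Stmt3Aux

namespace Stmt3Aux

lemma aeval_apply (p : Polynomial ℂ) (x : C₀(ℕ, ℂ)) (k : ℕ) :
    (Polynomial.aeval Top p : C₀(ℕ, ℂ) →L[ℂ] C₀(ℕ, ℂ)) x k =
      p.eval ((lam k : ℝ) : ℂ) * x k + (p.eval ((lam k : ℝ) : ℂ) - p.eval 0) * x 0 := by
  induction p using Polynomial.induction_on generalizing x k with
  | C a =>
      simp only [Polynomial.aeval_C, Polynomial.eval_C]
      rw [Algebra.algebraMap_eq_smul_one]
      simp only [ContinuousLinearMap.smul_apply, ContinuousLinearMap.one_apply,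
        ZeroAtInftyContinuousMap.coe_smul, Pi.smul_apply, smul_eq_mul]
      ring
  | add p q hp hq =>
      have hadd : Polynomial.aeval Top (p + q) = Polynomial.aeval Top p + Polynomial.aeval Top q :=
        map_add (Polynomial.aeval Top) p q
      rw [hadd]
      simp only [ContinuousLinearMap.add_apply, Polynomial.eval_add,
        ZeroAtInftyContinuousMap.coe_add, Pi.add_apply, hp, hq]
      ring
  | monomial n a ih =>
      have hrw : (Polynomial.C a * Polynomial.X ^ (n + 1) : Polynomial ℂ) =
          (Polynomial.C a * Polynomial.X ^ n) * Polynomial.X := by ring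
      rw [hrw, map_mul (Polynomial.aeval Top), Polynomial.aeval_X, ContinuousLinearMap.mul_apply, ih (Top x) k,
        Top_apply_zero, Top_apply]
      simp only [Polynomial.eval_mul, Polynomial.eval_C, Polynomial.eval_pow, Polynomial.eval_X,
        mul_zero, add_zero, pow_succ]
      ring
end Stmt3Aux

namespace Stmt3Aux

lemma part1 (p : Polynomial ℂ) :
    ‖(Polynomial.aeval Top p : C₀(ℕ, ℂ) →L[ℂ] C₀(ℕ, ℂ))‖ ≤
      3 * bvNorm sigma0 (fun t : ℝ => p.eval (t : ℂ)) := by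
  set F : ℝ → ℂ := fun t : ℝ => p.eval (t : ℂ) with hF
  set S : Set ℝ := (fun t => ‖F t‖) '' sigma0 with hS
  have hbdd : BddAbove S := by
    apply IsCompact.bddAbove_image sigma0_isCompact
    apply Continuous.continuousOn
    exact (p.continuous.comp Complex.continuous_ofReal).norm
  set M : ℝ := sSup S with hM
  have hMk : ∀ k : ℕ, ‖p.eval ((lam k : ℝ) : ℂ)‖ ≤ M :=
    fun k => le_csSup hbdd ⟨lam k, lam_mem k, rfl⟩
  have hM0 : ‖p.eval (0 : ℂ)‖ ≤ M := by
    have := hMk 0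
    rwa [lam_zero, Complex.ofReal_zero] at this
  have hMnonneg : 0 ≤ M := le_trans (norm_nonneg _) hM0
  have hop : ‖(Polynomial.aeval Top p : C₀(ℕ, ℂ) →L[ℂ] C₀(ℕ, ℂ))‖ ≤ 3 * M := by
    apply ContinuousLinearMap.opNorm_le_bound _ (by positivity)
    intro x
    apply norm_le_of _ (by positivity)
    intro k
    rw [aeval_apply]
    calc ‖p.eval ((lam k : ℝ) : ℂ) * x k + (p.eval ((lam k : ℝ) : ℂ) - p.eval 0) * x 0‖
        ≤ ‖p.eval ((lam k : ℝ) : ℂ) * x k‖ + ‖(p.eval ((lam k : ℝ) : ℂ) - p.eval 0) * x 0‖ :=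
          norm_add_le _ _
      _ ≤ M * ‖x‖ + (M + M) * ‖x‖ := by
          rw [norm_mul, norm_mul]
          apply add_le_add
          · exact mul_le_mul (hMk k) (norm_coord x k) (norm_nonneg _) hMnonneg
          · apply mul_le_mul _ (norm_coord x 0) (norm_nonneg _) (by positivity)
            calc ‖p.eval ((lam k : ℝ) : ℂ) - p.eval 0‖
                ≤ ‖p.eval ((lam k : ℝ) : ℂ)‖ + ‖p.eval (0:ℂ)‖ := norm_sub_le _ _
              _ ≤ M + M := add_le_add (hMk k) hM0
      _ = 3 * M * ‖x‖ := by ring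
  refine hop.trans ?_
  have : M ≤ bvNorm sigma0 F := by
    rw [bvNorm]
    have := ENNReal.toReal_nonneg (a := eVariationOn F sigma0)
    linarith
  linarith

end Stmt3Aux

namespace Stmt3Aux

lemma evar_le_of_sub_mono {φ ψ : ℝ → ℝ} {f : ℝ → ℂ} {ε : ℝ}
    (hf : ∀ t, f t = ((φ t : ℝ) : ℂ) - ((ψ t : ℝ) : ℂ))
    (hφ : MonotoneOn φ sigma0) (hψ : MonotoneOn ψ sigma0)
    (hφr : ∀ t ∈ sigma0, φ t ∈ Set.Icc 0 ε) (hψr : ∀ t ∈ sigma0, ψ t ∈ Set.Icc 0 ε) :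
    eVariationOn f sigma0 ≤ ENNReal.ofReal (ε + ε) := by
  apply iSup_le
  rintro ⟨n, ⟨u, hu, us⟩⟩
  have key : ∀ i : ℕ, edist (f (u (i + 1))) (f (u i)) ≤
      ENNReal.ofReal (φ (u (i + 1)) - φ (u i)) + ENNReal.ofReal (ψ (u (i + 1)) - ψ (u i)) := by
    intro i
    have hmono := hu (Nat.le_succ i)
    have hφd : 0 ≤ φ (u (i + 1)) - φ (u i) :=
      sub_nonneg.mpr (hφ (us i) (us (i + 1)) hmono)
    have hψd : 0 ≤ ψ (u (i + 1)) - ψ (u i) :=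
      sub_nonneg.mpr (hψ (us i) (us (i + 1)) hmono)
    rw [edist_dist, ← ENNReal.ofReal_add hφd hψd]
    apply ENNReal.ofReal_le_ofReal
    rw [dist_eq_norm, hf, hf]
    calc ‖(((φ (u (i+1)) : ℝ) : ℂ) - (ψ (u (i+1)) : ℝ)) - (((φ (u i) : ℝ) : ℂ) - (ψ (u i) : ℝ))‖
        = ‖((((φ (u (i+1)) - φ (u i) : ℝ)) : ℂ) - (((ψ (u (i+1)) - ψ (u i) : ℝ)) : ℂ))‖ := by
          push_cast; ring_nf
      _ ≤ ‖(((φ (u (i+1)) - φ (u i) : ℝ)) : ℂ)‖ + ‖(((ψ (u (i+1)) - ψ (u i) : ℝ)) : ℂ)‖ :=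
          norm_sub_le _ _
      _ = (φ (u (i+1)) - φ (u i)) + (ψ (u (i+1)) - ψ (u i)) := by
          rw [Complex.norm_real, Complex.norm_real, Real.norm_eq_abs, Real.norm_eq_abs,
            abs_of_nonneg hφd, abs_of_nonneg hψd]
  calc (∑ i ∈ Finset.range n, edist (f (u (i + 1))) (f (u i)))
      ≤ ∑ i ∈ Finset.range n, (ENNReal.ofReal (φ (u (i + 1)) - φ (u i)) +
          ENNReal.ofReal (ψ (u (i + 1)) - ψ (u i))) :=
        Finset.sum_le_sum fun i _ => key i
    _ = (∑ i ∈ Finset.range n, ENNReal.ofReal (φ (u (i + 1)) - φ (u i))) +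
        (∑ i ∈ Finset.range n, ENNReal.ofReal (ψ (u (i + 1)) - ψ (u i))) :=
        Finset.sum_add_distrib
    _ ≤ ENNReal.ofReal ε + ENNReal.ofReal ε := by
        apply add_le_add
        · rw [← ENNReal.ofReal_sum_of_nonneg (fun i _ =>
            sub_nonneg.mpr (hφ (us i) (us (i + 1)) (hu (Nat.le_succ i))))]
          rw [Finset.sum_range_sub (fun i => φ (u i))]
          apply ENNReal.ofReal_le_ofReal
          have h1 := (hφr _ (us n)).2
          have h2 := (hφr _ (us 0)).1
          linarith
        · rw [← ENNReal.ofReal_sum_of_nonneg (fun i _ =>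
            sub_nonneg.mpr (hψ (us i) (us (i + 1)) (hu (Nat.le_succ i))))]
          rw [Finset.sum_range_sub (fun i => ψ (u i))]
          apply ENNReal.ofReal_le_ofReal
          have h1 := (hψr _ (us n)).2
          have h2 := (hψr _ (us 0)).1
          linarith
    _ = ENNReal.ofReal (ε + ε) := by
        rw [ENNReal.ofReal_add]
        · exact le_trans (hφr _ zero_mem_sigma0).1 (hφr _ zero_mem_sigma0).2
        · exact le_trans (hψr _ zero_mem_sigma0).1 (hψr _ zero_mem_sigma0).2

lemma bvFacts {φ ψ : ℝ → ℝ} {f : ℝ → ℂ} {ε : ℝ}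
    (hf : ∀ t, f t = ((φ t : ℝ) : ℂ) - ((ψ t : ℝ) : ℂ))
    (hφ : MonotoneOn φ sigma0) (hψ : MonotoneOn ψ sigma0)
    (hφr : ∀ t ∈ sigma0, φ t ∈ Set.Icc 0 ε) (hψr : ∀ t ∈ sigma0, ψ t ∈ Set.Icc 0 ε) :
    BoundedVariationOn f sigma0 ∧ bvNorm sigma0 f ≤ 3 * ε := by
  have hε : 0 ≤ ε :=
    le_trans (hφr _ zero_mem_sigma0).1 (hφr _ zero_mem_sigma0).2
  have hvar := evar_le_of_sub_mono hf hφ hψ hφr hψr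
  constructor
  · exact ne_top_of_le_ne_top ENNReal.ofReal_ne_top hvar
  · rw [bvNorm]
    have hsup : sSup ((fun t => ‖f t‖) '' sigma0) ≤ ε := by
      apply Real.sSup_le _ hε
      rintro y ⟨t, ht, rfl⟩
      show ‖f t‖ ≤ ε
      rw [hf]
      have h1 := hφr t ht
      have h2 := hψr t ht
      rw [Set.mem_Icc] at h1 h2
      calc ‖((φ t : ℝ) : ℂ) - ((ψ t : ℝ) : ℂ)‖ = ‖(((φ t - ψ t : ℝ)) : ℂ)‖ := by push_cast; ring_nf
        _ = |φ t - ψ t| := by rw [Complex.norm_real, Real.norm_eq_abs]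
        _ ≤ ε := abs_le.mpr ⟨by linarith, by linarith⟩
    have htr : (eVariationOn f sigma0).toReal ≤ ε + ε :=
      ENNReal.toReal_le_of_le_ofReal (by linarith) hvar
    linarith

end Stmt3Aux

namespace Stmt3Aux

/-! ### Peak polynomials -/

noncomputable def rfun (l : ℝ) (m : ℕ) (t : ℝ) : ℝ := (1 - 4⁻¹ * (t - l) ^ 2) ^ m

noncomputable def qpoly (l : ℝ) (m : ℕ) : Polynomial ℝ :=
  (1 - Polynomial.C 4⁻¹ * (Polynomial.X - Polynomial.C l) ^ 2) ^ m

lemma qpoly_eval (l : ℝ) (m : ℕ) (t : ℝ) : (qpoly l m).eval t = rfun l m t := by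
  simp [qpoly, rfun]

noncomputable def qC (l : ℝ) (m : ℕ) : Polynomial ℂ :=
  (qpoly l m).map Complex.ofRealHom

lemma qC_eval (l : ℝ) (m : ℕ) (t : ℝ) :
    (qC l m).eval ((t : ℝ) : ℂ) = ((rfun l m t : ℝ) : ℂ) := by
  rw [qC, ← qpoly_eval l m t]
  rw [show ((t : ℝ) : ℂ) = Complex.ofRealHom t from rfl, Polynomial.eval_map,
    Polynomial.eval₂_at_apply]
  rfl

section PeakFacts

variable {l : ℝ} {m : ℕ}

lemma base_nonneg (hl1 : -1 ≤ l) (hl2 : l ≤ 1 / 2) {t : ℝ} (h1 : -1 ≤ t) (h2 : t ≤ 1 / 2) :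
    0 ≤ 1 - 4⁻¹ * (t - l) ^ 2 := by nlinarith

lemma rfun_nonneg (hl1 : -1 ≤ l) (hl2 : l ≤ 1 / 2) (m : ℕ) {t : ℝ} (h1 : -1 ≤ t) (h2 : t ≤ 1 / 2) : 0 ≤ rfun l m t :=
  pow_nonneg (base_nonneg hl1 hl2 h1 h2) m

lemma rfun_le_one (hl1 : -1 ≤ l) (hl2 : l ≤ 1 / 2) (m : ℕ) {t : ℝ} (h1 : -1 ≤ t) (h2 : t ≤ 1 / 2) : rfun l m t ≤ 1 :=
  pow_le_one₀ (base_nonneg hl1 hl2 h1 h2) (by nlinarith)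

lemma rfun_mono_left (hl1 : -1 ≤ l) (hl2 : l ≤ 1 / 2) (m : ℕ) {s t : ℝ} (h1 : -1 ≤ s) (hst : s ≤ t) (h2 : t ≤ l) :
    rfun l m s ≤ rfun l m t := by
  apply pow_le_pow_left₀ (base_nonneg hl1 hl2 h1 (by linarith))
  nlinarith

lemma rfun_anti_right (hl1 : -1 ≤ l) (hl2 : l ≤ 1 / 2) (m : ℕ) {s t : ℝ} (h1 : l ≤ s) (hst : s ≤ t) (h2 : t ≤ 1 / 2) :
    rfun l m t ≤ rfun l m s := by
  apply pow_le_pow_left₀ (base_nonneg hl1 hl2 (by linarith) h2)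
  nlinarith

lemma rfun_peak (m : ℕ) : rfun l m l = 1 := by simp [rfun]

end PeakFacts

/-! ### The jump function `u` -/

noncomputable def uR (t : ℝ) : ℝ := if 0 < t then 1 else 0

noncomputable def ujump : ℝ → ℂ := fun t => ((uR t : ℝ) : ℂ)

lemma uR_mono : Monotone uR := by
  intro a b hab
  by_cases ha : 0 < a
  · rw [uR, if_pos ha, uR, if_pos (lt_of_lt_of_le ha hab)]
  · rw [uR, if_neg ha]
    by_cases hb : 0 < b <;> simp [uR, hb]

lemma uR_mem (t : ℝ) : uR t ∈ Set.Icc (0 : ℝ) 1 := by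
  rw [uR]; by_cases h : 0 < t <;> simp [h]

lemma monoOn_mul_sigma0 {f g : ℝ → ℝ} (hf : MonotoneOn f sigma0) (hg : MonotoneOn g sigma0)
    (hf0 : ∀ t ∈ sigma0, 0 ≤ f t) (hg0 : ∀ t ∈ sigma0, 0 ≤ g t) :
    MonotoneOn (fun t => f t * g t) sigma0 := by
  intro a ha b hb hab
  exact mul_le_mul (hf ha hb hab) (hg ha hb hab) (hg0 a ha) (le_trans (hf0 a ha) (hf ha hb hab))

end Stmt3Aux

namespace Stmt3Aux

noncomputable def pf (l : ℝ) (m : ℕ) : ℝ → ℂ := fun t => (qC l m).eval ((t : ℝ) : ℂ)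

lemma pf_eq (l : ℝ) (m : ℕ) (t : ℝ) : pf l m t = ((rfun l m t : ℝ) : ℂ) := qC_eval l m t

lemma s0b {t : ℝ} (ht : t ∈ sigma0) : -1 ≤ t ∧ t ≤ 1 / 2 := by
  have := sigma0_subset ht
  rwa [Set.mem_Icc] at this

noncomputable def Afun (l : ℝ) (m : ℕ) (t : ℝ) : ℝ := rfun l m (min t l)

noncomputable def Bfun (l : ℝ) (m : ℕ) (t : ℝ) : ℝ := Afun l m t - rfun l m t

section Packages

variable {l : ℝ} {m : ℕ}

lemma Afun_mono (hl1 : -1 ≤ l) (hl2 : l ≤ 1 / 2) (m : ℕ) : MonotoneOn (Afun l m) sigma0 := by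
  intro a ha b hb hab
  exact rfun_mono_left hl1 hl2 m (le_min (s0b ha).1 hl1) (min_le_min hab le_rfl) (min_le_right _ _)

lemma Afun_mem (hl1 : -1 ≤ l) (hl2 : l ≤ 1 / 2) (m : ℕ) :
    ∀ t ∈ sigma0, Afun l m t ∈ Set.Icc (0 : ℝ) 1 := by
  intro t ht
  have h1 : -1 ≤ min t l := le_min (s0b ht).1 hl1
  have h2 : min t l ≤ 1 / 2 := le_trans (min_le_right _ _) hl2
  exact ⟨rfun_nonneg hl1 hl2 m h1 h2, rfun_le_one hl1 hl2 m h1 h2⟩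

lemma Bfun_mono (hl1 : -1 ≤ l) (hl2 : l ≤ 1 / 2) (m : ℕ) : MonotoneOn (Bfun l m) sigma0 := by
  intro a ha b hb hab
  rcases le_total b l with hbl | hlb
  · have hal : a ≤ l := le_trans hab hbl
    rw [Bfun, Bfun, Afun, Afun, min_eq_left hal, min_eq_left hbl]
    simp
  · rcases le_total a l with hal | hla
    · rw [Bfun, Bfun, Afun, Afun, min_eq_left hal, min_eq_right hlb, rfun_peak]
      have := rfun_le_one hl1 hl2 m (s0b hb).1 (s0b hb).2
      simp; linarith
    · rw [Bfun, Bfun, Afun, Afun, min_eq_right hla, min_eq_right hlb, rfun_peak]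
      have := rfun_anti_right hl1 hl2 m hla hab (s0b hb).2
      linarith

lemma Bfun_mem (hl1 : -1 ≤ l) (hl2 : l ≤ 1 / 2) (m : ℕ) :
    ∀ t ∈ sigma0, Bfun l m t ∈ Set.Icc (0 : ℝ) 1 := by
  intro t ht
  have h0 : 0 ≤ rfun l m t := rfun_nonneg hl1 hl2 m (s0b ht).1 (s0b ht).2
  have hA := Afun_mem hl1 hl2 m t ht
  rw [Set.mem_Icc] at hA
  constructor
  · rcases le_total t l with htl | hlt
    · rw [Bfun, Afun, min_eq_left htl]; simp
    · rw [Bfun, Afun, min_eq_right hlt, rfun_peak]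
      have := rfun_le_one hl1 hl2 m (s0b ht).1 (s0b ht).2
      linarith
  · rw [Bfun]; linarith

/-- `u` has bounded variation. -/
lemma bv_u : BoundedVariationOn ujump sigma0 :=
  (bvFacts (φ := uR) (ψ := fun _ => 0) (ε := 1)
    (fun t => by simp [ujump])
    (uR_mono.monotoneOn _) (monotoneOn_const)
    (fun t _ => uR_mem t) (fun t _ => by simp)).1

/-- the identity has bounded variation. -/
lemma bv_idf : BoundedVariationOn (fun t : ℝ => (t : ℂ)) sigma0 :=
  (bvFacts (φ := fun t => t + 1) (ψ := fun _ => 1) (ε := 2)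
    (fun t => by push_cast; ring)
    (fun a _ b _ hab => by simpa using hab) (monotoneOn_const)
    (fun t ht => by
      have h := s0b ht
      simp only [Set.mem_Icc]
      constructor <;> [linarith [h.1]; linarith [h.2]])
    (fun t _ => by norm_num)).1

/-- the peak polynomial function has bounded variation. -/
lemma bv_pf (hl1 : -1 ≤ l) (hl2 : l ≤ 1 / 2) (m : ℕ) :
    BoundedVariationOn (pf l m) sigma0 :=
  (bvFacts (φ := Afun l m) (ψ := Bfun l m) (ε := 1)
    (fun t => by rw [pf_eq, Bfun]; push_cast; ring)
    (Afun_mono hl1 hl2 m) (Bfun_mono hl1 hl2 m)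
    (Afun_mem hl1 hl2 m) (Bfun_mem hl1 hl2 m)).1

/-- `u * pf` has bounded variation (general case). -/
lemma bv_upf (hl1 : -1 ≤ l) (hl2 : l ≤ 1 / 2) (m : ℕ) :
    BoundedVariationOn (ujump * pf l m) sigma0 :=
  (bvFacts (φ := fun t => Afun l m t * uR t) (ψ := fun t => Bfun l m t * uR t) (ε := 1)
    (fun t => by
      simp only [Pi.mul_apply, ujump, pf_eq, Bfun]
      push_cast; ring)
    (monoOn_mul_sigma0 (Afun_mono hl1 hl2 m) (uR_mono.monotoneOn _)
      (fun t ht => (Afun_mem hl1 hl2 m t ht).1) (fun t _ => (uR_mem t).1))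
    (monoOn_mul_sigma0 (Bfun_mono hl1 hl2 m) (uR_mono.monotoneOn _)
      (fun t ht => (Bfun_mem hl1 hl2 m t ht).1) (fun t _ => (uR_mem t).1))
    (fun t ht => by
      have hA := Afun_mem hl1 hl2 m t ht
      have hu := uR_mem t
      rw [Set.mem_Icc] at *
      constructor
      · exact mul_nonneg hA.1 hu.1
      · calc Afun l m t * uR t ≤ 1 * 1 := mul_le_mul hA.2 hu.2 hu.1 zero_le_one
          _ = 1 := by ring)
    (fun t ht => by
      have hB := Bfun_mem hl1 hl2 m t ht
      have hu := uR_mem t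
      rw [Set.mem_Icc] at *
      constructor
      · exact mul_nonneg hB.1 hu.1
      · calc Bfun l m t * uR t ≤ 1 * 1 := mul_le_mul hB.2 hu.2 hu.1 zero_le_one
          _ = 1 := by ring)).1

end Packages

end Stmt3Aux

namespace Stmt3Aux

section SmallPackages

variable {l : ℝ} {m : ℕ}

/-- The "small peak value": `rfun l m 0 = (1 - l²/4)^m`. -/
lemma eps_nonneg (hl1 : -1 ≤ l) (hl2 : l ≤ 1 / 2) (m : ℕ) : 0 ≤ rfun l m 0 :=
  rfun_nonneg hl1 hl2 m (by norm_num) (by norm_num)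

/-- Even case: `p - u·p` is small in `BV` norm when the peak `l` is positive. -/
lemma bv_small_even (hl1 : -1 ≤ l) (hl2 : l ≤ 1 / 2) (hl0 : 0 ≤ l) (m : ℕ) :
    BoundedVariationOn (fun t => pf l m t - ujump t * pf l m t) sigma0 ∧
      bvNorm sigma0 (fun t => pf l m t - ujump t * pf l m t) ≤ 3 * rfun l m 0 := by
  have key := bvFacts (f := fun t => pf l m t - ujump t * pf l m t)
    (φ := fun t => rfun l m (min t 0)) (ψ := fun t => rfun l m (min t 0) * uR t)
    (ε := rfun l m 0)
    (fun t => by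
      by_cases h : 0 < t
      · simp [ujump, uR, if_pos h, pf_eq, min_eq_right h.le]
      · push_neg at h
        simp [ujump, uR, not_lt.mpr h, pf_eq, min_eq_left h])
    (fun a ha b hb hab =>
      rfun_mono_left hl1 hl2 m (le_min (s0b ha).1 (by norm_num))
        (min_le_min hab le_rfl) (le_trans (min_le_right _ _) hl0))
    (monoOn_mul_sigma0
      (fun a ha b hb hab =>
        rfun_mono_left hl1 hl2 m (le_min (s0b ha).1 (by norm_num))
          (min_le_min hab le_rfl) (le_trans (min_le_right _ _) hl0))
      (uR_mono.monotoneOn _)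
      (fun t ht => rfun_nonneg hl1 hl2 m (le_min (s0b ht).1 (by norm_num))
        (le_trans (min_le_right _ _) (by norm_num)))
      (fun t _ => (uR_mem t).1))
    (fun t ht => by
      have h1 : -1 ≤ min t 0 := le_min (s0b ht).1 (by norm_num)
      have h2 : min t 0 ≤ 1 / 2 := le_trans (min_le_right _ _) (by norm_num)
      constructor
      · exact rfun_nonneg hl1 hl2 m h1 h2
      · exact rfun_mono_left hl1 hl2 m h1 (min_le_right _ _) hl0)
    (fun t ht => by
      have h1 : -1 ≤ min t 0 := le_min (s0b ht).1 (by norm_num)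
      have h2 : min t 0 ≤ 1 / 2 := le_trans (min_le_right _ _) (by norm_num)
      have hr0 : 0 ≤ rfun l m (min t 0) := rfun_nonneg hl1 hl2 m h1 h2
      have hre : rfun l m (min t 0) ≤ rfun l m 0 :=
        rfun_mono_left hl1 hl2 m h1 (min_le_right _ _) hl0
      have hu := uR_mem t
      rw [Set.mem_Icc] at hu
      constructor
      · exact mul_nonneg hr0 hu.1
      · calc rfun l m (min t 0) * uR t ≤ rfun l m 0 * 1 :=
            mul_le_mul hre hu.2 hu.1 (eps_nonneg hl1 hl2 m)
          _ = rfun l m 0 := by ring)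
  exact key

/-- Odd case: `u·p` is small in `BV` norm when the peak `l` is negative. -/
lemma bv_small_odd (hl1 : -1 ≤ l) (hl2 : l ≤ 1 / 2) (hl0 : l ≤ 0) (m : ℕ) :
    BoundedVariationOn (ujump * pf l m) sigma0 ∧
      bvNorm sigma0 (ujump * pf l m) ≤ 3 * rfun l m 0 := by
  have hanti : ∀ a ∈ sigma0, ∀ b ∈ sigma0, a ≤ b →
      rfun l m (max b 0) ≤ rfun l m (max a 0) := by
    intro a ha b hb hab
    exact rfun_anti_right hl1 hl2 m (le_trans hl0 (le_max_right _ _))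
      (max_le_max hab le_rfl) (max_le (s0b hb).2 (by norm_num))
  have hle : ∀ t ∈ sigma0, rfun l m (max t 0) ≤ rfun l m 0 := by
    intro t ht
    exact rfun_anti_right hl1 hl2 m (le_trans hl0 le_rfl) (le_max_right _ _)
      (max_le (s0b ht).2 (by norm_num))
  have hnn : ∀ t ∈ sigma0, 0 ≤ rfun l m (max t 0) := by
    intro t ht
    exact rfun_nonneg hl1 hl2 m (le_trans (by norm_num) (le_max_right _ _))
      (max_le (s0b ht).2 (by norm_num))
  have key := bvFacts (f := ujump * pf l m)
    (φ := fun t => rfun l m 0 * uR t)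
    (ψ := fun t => (rfun l m 0 - rfun l m (max t 0)) * uR t)
    (ε := rfun l m 0)
    (fun t => by
      by_cases h : 0 < t
      · simp only [Pi.mul_apply, ujump, uR, if_pos h, pf_eq, max_eq_left h.le]
        push_cast; ring
      · push_neg at h
        simp [ujump, uR, not_lt.mpr h, pf_eq])
    (monoOn_mul_sigma0 monotoneOn_const (uR_mono.monotoneOn _)
      (fun t _ => eps_nonneg hl1 hl2 m) (fun t _ => (uR_mem t).1))
    (monoOn_mul_sigma0
      (fun a ha b hb hab => by
        have := hanti a ha b hb hab
        linarith)
      (uR_mono.monotoneOn _)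
      (fun t ht => by have := hle t ht; linarith)
      (fun t _ => (uR_mem t).1))
    (fun t ht => by
      have hu := uR_mem t
      rw [Set.mem_Icc] at hu
      constructor
      · exact mul_nonneg (eps_nonneg hl1 hl2 m) hu.1
      · calc rfun l m 0 * uR t ≤ rfun l m 0 * 1 :=
            mul_le_mul_of_nonneg_left hu.2 (eps_nonneg hl1 hl2 m)
          _ = rfun l m 0 := by ring)
    (fun t ht => by
      have hu := uR_mem t
      rw [Set.mem_Icc] at hu
      have h1 := hle t ht
      have h2 := hnn t ht
      constructor
      · exact mul_nonneg (by linarith) hu.1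
      · calc (rfun l m 0 - rfun l m (max t 0)) * uR t ≤ rfun l m 0 * 1 :=
            mul_le_mul (by linarith) hu.2 hu.1 (eps_nonneg hl1 hl2 m)
          _ = rfun l m 0 := by ring)
  exact key

end SmallPackages

end Stmt3Aux

namespace Stmt3Aux

lemma aevalQ_unit {n : ℕ} (hn : 1 ≤ n) (m : ℕ) :
    (Polynomial.aeval Top (qC (lam n) m) : C₀(ℕ, ℂ) →L[ℂ] C₀(ℕ, ℂ)) (unit n) = unit n := by
  ext k
  rw [aeval_apply]
  have h0 : unit n 0 = 0 := by
    simp only [unit_apply]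
    rw [if_neg]
    omega
  rw [h0, mul_zero, add_zero]
  by_cases h : k = n
  · subst h
    have : (qC (lam k) m).eval ((lam k : ℝ) : ℂ) = 1 := by
      rw [qC_eval, rfun_peak]
      norm_num
    simp [this]
  · simp [h]

section Forced

variable {C' : ℝ} {Ψ : (ℝ → ℂ) → C₀(ℕ, ℂ) →L[ℂ] C₀(ℕ, ℂ)}

lemma rho_facts {n : ℕ} (hn : 1 ≤ n) :
    0 ≤ 1 - 4⁻¹ * (lam n) ^ 2 ∧ 1 - 4⁻¹ * (lam n) ^ 2 < 1 ∧
      ∀ m, rfun (lam n) m 0 = (1 - 4⁻¹ * (lam n) ^ 2) ^ m := by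
  have h1 := neg_one_le_lam n
  have h2 := lam_le_half n
  have h3 := lam_ne_zero hn
  have h4 : 0 < (lam n) ^ 2 := lt_of_le_of_ne (sq_nonneg _) (Ne.symm (pow_ne_zero 2 h3))
  refine ⟨by nlinarith, by nlinarith, ?_⟩
  intro m
  rw [rfun]
  ring_nf

lemma forced_even (hC' : 0 < C')
    (hops : ∀ f g : ℝ → ℂ, BoundedVariationOn f sigma0 → BoundedVariationOn g sigma0 →
      Ψ (f + g) = Ψ f + Ψ g ∧ Ψ (f * g) = (Ψ f).comp (Ψ g))
    (hbnd : ∀ f : ℝ → ℂ, BoundedVariationOn f sigma0 → ‖Ψ f‖ ≤ C' * bvNorm sigma0 f)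
    (hpoly : ∀ p : Polynomial ℂ, Ψ (fun t : ℝ => p.eval (t : ℂ)) = Polynomial.aeval Top p)
    {n : ℕ} (hn : 1 ≤ n) (hev : Even n) :
    (Ψ ujump) (unit n) = unit n := by
  set P := Ψ ujump with hP
  set l := lam n with hldef
  have hl1 : -1 ≤ l := neg_one_le_lam n
  have hl2 : l ≤ 1 / 2 := lam_le_half n
  have hl0 : 0 < l := by
    rw [hldef, lam_even hev]
    have : (0 : ℝ) < n := by exact_mod_cast hn
    positivity
  obtain ⟨hρ0, hρ1, hrm⟩ := rho_facts hn
  rw [← hldef] at hρ0 hρ1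
  simp only [← hldef] at hrm
  set ρ := 1 - 4⁻¹ * l ^ 2 with hρdef
  have key : ∀ m : ℕ, ‖unit n - P (unit n)‖ ≤ C' * (3 * ρ ^ m) := by
    intro m
    set s : ℝ → ℂ := fun t => pf l m t - ujump t * pf l m t with hs
    have hbvs := bv_small_even hl1 hl2 hl0.le m
    have hQ : Ψ (pf l m) = Polynomial.aeval Top (qC l m) := hpoly (qC l m)
    have hg := (hops ujump (pf l m) bv_u (bv_pf hl1 hl2 m)).2
    have hsplit := (hops (ujump * pf l m) s (bv_upf hl1 hl2 m) hbvs.1).1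
    have hsum : (ujump * pf l m) + s = pf l m := by
      funext t
      simp only [Pi.add_apply, Pi.mul_apply, hs]
      ring
    rw [hsum] at hsplit
    have hSval : Ψ s = Polynomial.aeval Top (qC l m) -
        (Ψ ujump).comp (Polynomial.aeval Top (qC l m)) := by
      rw [← hQ, ← hg]
      rw [hsplit]; abel
    have happ : (Ψ s) (unit n) = unit n - P (unit n) := by
      rw [hSval]
      rw [ContinuousLinearMap.sub_apply, ContinuousLinearMap.comp_apply, aevalQ_unit hn m]
    have hnorm := hbnd s hbvs.1
    have hbv : bvNorm sigma0 s ≤ 3 * ρ ^ m := by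
      rw [← hrm m]
      exact hbvs.2
    calc ‖unit n - P (unit n)‖ = ‖(Ψ s) (unit n)‖ := by rw [happ]
      _ ≤ ‖Ψ s‖ * ‖unit n‖ := (Ψ s).le_opNorm _
      _ = ‖Ψ s‖ := by rw [norm_unit, mul_one]
      _ ≤ C' * bvNorm sigma0 s := hnorm
      _ ≤ C' * (3 * ρ ^ m) := mul_le_mul_of_nonneg_left hbv hC'.le
  have hlim : Tendsto (fun m : ℕ => C' * (3 * ρ ^ m)) atTop (𝓝 0) := by
    have h := tendsto_pow_atTop_nhds_zero_of_lt_one hρ0 hρ1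
    have := (h.const_mul (3 : ℝ)).const_mul C'
    simpa using this
  have hle : ‖unit n - P (unit n)‖ ≤ 0 :=
    le_of_tendsto_of_tendsto tendsto_const_nhds hlim (Filter.Eventually.of_forall key)
  have : unit n - P (unit n) = 0 := by
    rwa [← norm_le_zero_iff]
  rw [sub_eq_zero] at this
  exact this.symm

lemma forced_odd (hC' : 0 < C')
    (hops : ∀ f g : ℝ → ℂ, BoundedVariationOn f sigma0 → BoundedVariationOn g sigma0 →
      Ψ (f + g) = Ψ f + Ψ g ∧ Ψ (f * g) = (Ψ f).comp (Ψ g))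
    (hbnd : ∀ f : ℝ → ℂ, BoundedVariationOn f sigma0 → ‖Ψ f‖ ≤ C' * bvNorm sigma0 f)
    (hpoly : ∀ p : Polynomial ℂ, Ψ (fun t : ℝ => p.eval (t : ℂ)) = Polynomial.aeval Top p)
    {n : ℕ} (hn : 1 ≤ n) (hodd : Odd n) :
    (Ψ ujump) (unit n) = 0 := by
  set P := Ψ ujump with hP
  set l := lam n with hldef
  have hl1 : -1 ≤ l := neg_one_le_lam n
  have hl2 : l ≤ 1 / 2 := lam_le_half n
  have hl0 : l ≤ 0 := by
    rw [hldef, lam_odd hodd]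
    have : (0 : ℝ) ≤ 1 / n := by positivity
    linarith
  obtain ⟨hρ0, hρ1, hrm⟩ := rho_facts hn
  rw [← hldef] at hρ0 hρ1
  simp only [← hldef] at hrm
  set ρ := 1 - 4⁻¹ * l ^ 2 with hρdef
  have key : ∀ m : ℕ, ‖P (unit n)‖ ≤ C' * (3 * ρ ^ m) := by
    intro m
    have hbvs := bv_small_odd hl1 hl2 hl0 m
    have hQ : Ψ (pf l m) = Polynomial.aeval Top (qC l m) := hpoly (qC l m)
    have hg := (hops ujump (pf l m) bv_u (bv_pf hl1 hl2 m)).2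
    rw [hQ] at hg
    have happ : (Ψ (ujump * pf l m)) (unit n) = P (unit n) := by
      rw [hg, ContinuousLinearMap.comp_apply, aevalQ_unit hn m]
    have hnorm := hbnd _ hbvs.1
    have hbv : bvNorm sigma0 (ujump * pf l m) ≤ 3 * ρ ^ m := by
      rw [← hrm m]
      exact hbvs.2
    calc ‖P (unit n)‖ = ‖(Ψ (ujump * pf l m)) (unit n)‖ := by rw [happ]
      _ ≤ ‖Ψ (ujump * pf l m)‖ * ‖unit n‖ := (Ψ _).le_opNorm _
      _ = ‖Ψ (ujump * pf l m)‖ := by rw [norm_unit, mul_one]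
      _ ≤ C' * bvNorm sigma0 (ujump * pf l m) := hnorm
      _ ≤ C' * (3 * ρ ^ m) := mul_le_mul_of_nonneg_left hbv hC'.le
  have hlim : Tendsto (fun m : ℕ => C' * (3 * ρ ^ m)) atTop (𝓝 0) := by
    have h := tendsto_pow_atTop_nhds_zero_of_lt_one hρ0 hρ1
    have := (h.const_mul (3 : ℝ)).const_mul C'
    simpa using this
  have hle : ‖P (unit n)‖ ≤ 0 :=
    le_of_tendsto_of_tendsto tendsto_const_nhds hlim (Filter.Eventually.of_forall key)
  rwa [← norm_le_zero_iff]

end Forced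

end Stmt3Aux

namespace Stmt3Aux

noncomputable def evalAM (j : ℕ) : C₀(ℕ, ℂ) →+ ℂ :=
  AddMonoidHom.mk' (fun y => y j) (by intro a b; simp)

lemma coord_sum (s : Finset ℕ) (f : ℕ → C₀(ℕ, ℂ)) (j : ℕ) :
    (∑ k ∈ s, f k) j = ∑ k ∈ s, f k j :=
  map_sum (evalAM j) f s

lemma eval_lipschitz (j : ℕ) : LipschitzWith 1 (fun y : C₀(ℕ, ℂ) => y j) := by
  apply LipschitzWith.of_dist_le_mul
  intro y z
  simp only [NNReal.coe_one, one_mul, dist_eq_norm]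
  have h : y j - z j = (y - z) j := by simp
  rw [h]
  exact norm_coord _ j

theorem no_ext : ¬ HasBVExtension sigma0 Top := by
  rintro ⟨C', hC', Ψ, hops, hbnd, hpoly⟩
  have hid : Ψ (fun t : ℝ => (t : ℂ)) = Top := by
    have h := hpoly Polynomial.X
    simpa using h
  have hcomm : (Ψ ujump).comp Top = Top.comp (Ψ ujump) := by
    have h1 := (hops ujump (fun t : ℝ => (t : ℂ)) bv_u bv_idf).2
    have h2 := (hops (fun t : ℝ => (t : ℂ)) ujump bv_idf bv_u).2
    rw [hid] at h1 h2
    have h3 : ujump * (fun t : ℝ => (t : ℂ)) = (fun t : ℝ => (t : ℂ)) * ujump :=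
      mul_comm _ _
    rw [← h1, h3, h2]
  set c : ℕ → ℂ := fun k => if Even k then 1 else 0 with hcdef
  have hPunit : ∀ k, 1 ≤ k → (Ψ ujump) (unit k) = c k • unit k := by
    intro k hk
    rcases Nat.even_or_odd k with he | ho
    · rw [forced_even hC' hops hbnd hpoly hk he, hcdef]
      simp [he]
    · rw [forced_odd hC' hops hbnd hpoly hk ho, hcdef]
      simp [Nat.not_even_iff_odd.mpr ho]
  set v := Top (unit 0) with hvdef
  have hv : ∀ j, v j = ((lam j : ℝ) : ℂ) := by
    intro j
    rw [hvdef, Top_apply]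
    by_cases h : j = 0
    · subst h; simp [lam_zero]
    · simp [h]
  set vN : ℕ → C₀(ℕ, ℂ) := fun N => ∑ k ∈ Finset.range N, ((lam k : ℝ) : ℂ) • unit k
    with hvNdef
  have hvN : ∀ N j, vN N j = if j < N then ((lam j : ℝ) : ℂ) else 0 := by
    intro N j
    rw [hvNdef]
    rw [coord_sum]
    have hterm : ∀ k ∈ Finset.range N,
        (((lam k : ℝ) : ℂ) • unit k) j = if k = j then ((lam j : ℝ) : ℂ) else 0 := by
      intro k _
      by_cases h : k = j
      · subst h; simp
      · simp [h, Ne.symm h]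
    rw [Finset.sum_congr rfl hterm, Finset.sum_ite_eq' (Finset.range N) j
      (fun _ => ((lam j : ℝ) : ℂ))]
    simp [Finset.mem_range]
  have hdistN : ∀ N : ℕ, 1 ≤ N → ‖v - vN N‖ ≤ 1 / N := by
    intro N hN
    have hNpos : (0 : ℝ) < N := by exact_mod_cast hN
    apply norm_le_of _ (by positivity)
    intro j
    have hsub : (v - vN N) j = v j - vN N j := by simp
    rw [hsub, hv, hvN]
    by_cases h : j < N
    · rw [if_pos h, sub_self, norm_zero]
      positivity
    · rw [if_neg h, sub_zero, Complex.norm_real, Real.norm_eq_abs, abs_lam]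
      push_neg at h
      apply one_div_le_one_div_of_le hNpos
      exact_mod_cast h
  have hvNlim : Tendsto vN atTop (𝓝 v) := by
    apply tendsto_iff_dist_tendsto_zero.mpr
    apply squeeze_zero' (Filter.Eventually.of_forall fun N => dist_nonneg)
      (g := fun N : ℕ => 1 / (N : ℝ)) ?_ tendsto_one_div_atTop_nhds_zero_nat
    filter_upwards [eventually_ge_atTop 1] with N hN
    rw [dist_eq_norm, norm_sub_rev]
    exact hdistN N hN
  have hPv : ∀ j, 1 ≤ j → ((Ψ ujump) v) j = ((lam j : ℝ) : ℂ) * c j := by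
    intro j hj
    have hPlim : Tendsto (fun N => (Ψ ujump) (vN N)) atTop (𝓝 ((Ψ ujump) v)) :=
      ((Ψ ujump).continuous.tendsto v).comp hvNlim
    have hcoord : Tendsto (fun N => ((Ψ ujump) (vN N)) j) atTop (𝓝 (((Ψ ujump) v) j)) :=
      ((eval_lipschitz j).continuous.tendsto _).comp hPlim
    have heventually : ∀ N, j < N → ((Ψ ujump) (vN N)) j = ((lam j : ℝ) : ℂ) * c j := by
      intro N hN
      rw [hvNdef]
      simp only
      rw [map_sum, coord_sum]
      have hterm : ∀ k ∈ Finset.range N,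
          ((Ψ ujump) (((lam k : ℝ) : ℂ) • unit k)) j =
            if k = j then ((lam j : ℝ) : ℂ) * c j else 0 := by
        intro k _
        rw [(Ψ ujump).map_smul]
        rcases Nat.eq_zero_or_pos k with rfl | hk1
        · rw [lam_zero]
          rw [if_neg (by omega)]
          simp
        · rw [hPunit k hk1]
          by_cases h : k = j
          · subst h
            simp [smul_smul]
          · simp [smul_smul, h, Ne.symm h]
      rw [Finset.sum_congr rfl hterm, Finset.sum_ite_eq' (Finset.range N) j
        (fun _ => ((lam j : ℝ) : ℂ) * c j)]
      simp [Finset.mem_range.mpr hN]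
    refine tendsto_nhds_unique hcoord ?_
    apply Tendsto.congr' ?_ tendsto_const_nhds
    filter_upwards [eventually_gt_atTop j] with N hN
    exact (heventually N hN).symm
  set w := (Ψ ujump) (unit 0) with hwdef
  have hTw : Top w = (Ψ ujump) v := by
    have h := congrArg (fun S : C₀(ℕ, ℂ) →L[ℂ] C₀(ℕ, ℂ) => S (unit 0)) hcomm
    simpa using h.symm
  have hwc : ∀ j, 1 ≤ j → w j + w 0 = c j := by
    intro j hj
    have h1 : Top w j = ((lam j : ℝ) : ℂ) * (w j + w 0) := Top_apply w j
    have h2 : Top w j = ((lam j : ℝ) : ℂ) * c j := by rw [hTw, hPv j hj]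
    have h3 : ((lam j : ℝ) : ℂ) ≠ 0 := by
      simpa [Complex.ofReal_ne_zero] using lam_ne_zero hj
    apply mul_left_cancel₀ h3
    rw [← h1, h2]
  have hwtend := coord_tendsto w
  have hctend : Tendsto (fun j => c j) atTop (𝓝 (w 0)) := by
    have h : Tendsto (fun j => w j + w 0) atTop (𝓝 (0 + w 0)) :=
      hwtend.add tendsto_const_nhds
    rw [zero_add] at h
    apply h.congr'
    filter_upwards [eventually_ge_atTop 1] with j hj
    exact hwc j hj
  have he1 : Tendsto (fun i : ℕ => c (2 * i + 2)) atTop (𝓝 (w 0)) := by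
    apply hctend.comp
    apply Filter.tendsto_atTop_atTop.mpr
    exact fun b => ⟨b, fun a ha => by omega⟩
  have ho1 : Tendsto (fun i : ℕ => c (2 * i + 1)) atTop (𝓝 (w 0)) := by
    apply hctend.comp
    apply Filter.tendsto_atTop_atTop.mpr
    exact fun b => ⟨b, fun a ha => by omega⟩
  have he2 : (fun i : ℕ => c (2 * i + 2)) = fun _ => (1 : ℂ) := by
    funext i
    rw [hcdef]
    simp only
    rw [if_pos ⟨i + 1, by ring⟩]
  have ho2 : (fun i : ℕ => c (2 * i + 1)) = fun _ => (0 : ℂ) := by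
    funext i
    rw [hcdef]
    simp only
    rw [if_neg (by rw [Nat.even_iff]; omega)]
  rw [he2] at he1
  rw [ho2] at ho1
  have hw1 : w 0 = 1 := (tendsto_nhds_unique tendsto_const_nhds he1).symm
  have hw0 : w 0 = 0 := (tendsto_nhds_unique tendsto_const_nhds ho1).symm
  rw [hw1] at hw0
  exact one_ne_zero hw0

end Stmt3Aux

/-- There exist a bounded linear operator `T` on `c₀` and a constant `C > 0`
such that `‖p(T)‖ ≤ C·(sup_{t∈σ₀}|p(t)| + var_{σ₀}(p))` for every complex polynomial `p`, yet
there is no `BV(σ₀)` extension of the polynomial calculus of `T`. -/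
theorem stmt3 :
    ∃ (T : C₀(ℕ, ℂ) →L[ℂ] C₀(ℕ, ℂ)) (C : ℝ), 0 < C ∧
      (∀ p : Polynomial ℂ,
        ‖(Polynomial.aeval T p : C₀(ℕ, ℂ) →L[ℂ] C₀(ℕ, ℂ))‖ ≤
          C * bvNorm sigma0 (fun t : ℝ => p.eval (t : ℂ))) ∧
      ¬ HasBVExtension sigma0 T := by
  exact ⟨Stmt3Aux.Top, 3, by norm_num, Stmt3Aux.part1, Stmt3Aux.no_ext⟩
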